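/- arXiv:2010.15646 — 2 statements merged into one kernel-verified Lean document; each statement's English description precedes it below -/
import Mathlib

section
/- Let f : ℝ → ℝ be convex and differentiable, and suppose that for some real number m the graph of f lies above the line x ↦ c + m·x for all x (for some constant c), with equality (tangency) possibly occurring. Then m lies in the closure of the range of f'. -/
/-- If `f` is convex and differentiable and its graph lies above the line
`x ↦ c + m x`, then `m` lies in the closure of the range of `f'`. -/
theorem stmt_1 (f : ℝ → ℝ) (hf : ConvexOn ℝ Set.univ f)
    (hdiff : Differentiable ℝ f) (m c : ℝ)
    (hline : ∀ x : ℝ, c + m * x ≤ f x) :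
    m ∈ closure (Set.range (deriv f)) := by
  by_contra hm
  -- extract a positive distance ε from m to the range
  rw [Metric.mem_closure_iff] at hm
  push_neg at hm
  obtain ⟨ε, hε, hfar⟩ := hm
  have hfar' : ∀ ξ : ℝ, ε ≤ |m - deriv f ξ| := by
    intro ξ
    have := hfar (deriv f ξ) ⟨ξ, rfl⟩
    rwa [Real.dist_eq] at this
  have hD : ∀ x : ℝ, ∀ s : Set ℝ, HasDerivWithinAt f (deriv f x) s x :=
    fun x s => (hdiff x).hasDerivAt.hasDerivWithinAt
  -- derivative cannot take values on both sides of m (Darboux)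
  have hside : (∀ ξ, deriv f ξ ≤ m) ∨ (∀ ξ, m ≤ deriv f ξ) := by
    by_contra h
    push_neg at h
    obtain ⟨⟨ξ₁, h₁⟩, ⟨ξ₂, h₂⟩⟩ := h
    have hmem : m ∈ Set.range (deriv f) := by
      rcases le_total ξ₂ ξ₁ with hle | hle
      · obtain ⟨z, _, hz⟩ := exists_hasDerivWithinAt_eq_of_gt_of_lt hle
          (fun x _ => hD x _) h₂ h₁
        exact ⟨z, hz⟩
      · obtain ⟨z, _, hz⟩ := exists_hasDerivWithinAt_eq_of_lt_of_gt hle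
          (fun x _ => hD x _) h₁ h₂
        exact ⟨z, hz⟩
    obtain ⟨z, hz⟩ := hmem
    have := hfar' z
    rw [hz] at this
    simp at this
    linarith
  rcases hside with hle | hge
  · -- all derivatives ≤ m - ε ; contradiction at large positive x
    have hle' : ∀ ξ, deriv f ξ ≤ m - ε := by
      intro ξ
      have h1 := hfar' ξ
      have h2 := hle ξ
      rcases abs_cases (m - deriv f ξ) with ⟨ha, _⟩ | ⟨_, hb⟩ <;> linarith
    set x : ℝ := max 1 ((f 0 - c + 1) / ε) with hx
    have hx1 : (1 : ℝ) ≤ x := le_max_left _ _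
    have hx0 : (0 : ℝ) < x := by linarith
    obtain ⟨z, _, hz⟩ := exists_deriv_eq_slope f hx0
      (hdiff.continuous.continuousOn) (fun y _ => (hdiff y).differentiableWithinAt)
    have hzle := hle' z
    rw [hz] at hzle
    have hfx : f x ≤ f 0 + (m - ε) * x := by
      rw [div_le_iff₀ (by linarith : (0:ℝ) < x - 0)] at hzle
      linarith
    have hl := hline x
    have hεx : ε * x ≤ f 0 - c := by nlinarith
    have : (f 0 - c + 1) / ε ≤ x := le_max_right _ _
    rw [div_le_iff₀ hε] at this
    nlinarith
  · -- all derivatives ≥ m + ε ; contradiction at large negative x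
    have hge' : ∀ ξ, m + ε ≤ deriv f ξ := by
      intro ξ
      have h1 := hfar' ξ
      have h2 := hge ξ
      rcases abs_cases (m - deriv f ξ) with ⟨ha, _⟩ | ⟨_, hb⟩ <;> linarith
    set x : ℝ := min (-1) ((c - f 0 - 1) / ε) with hx
    have hx1 : x ≤ -1 := min_le_left _ _
    have hx0 : x < 0 := by linarith
    obtain ⟨z, _, hz⟩ := exists_deriv_eq_slope f hx0
      (hdiff.continuous.continuousOn) (fun y _ => (hdiff y).differentiableWithinAt)
    have hzge := hge' z
    rw [hz] at hzge
    have hfx : f x ≤ f 0 + (m + ε) * x := by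
      rw [le_div_iff₀ (by linarith : (0:ℝ) < 0 - x)] at hzge
      nlinarith
    have hl := hline x
    have hεx : c - f 0 ≤ ε * x := by nlinarith
    have : x ≤ (c - f 0 - 1) / ε := min_le_right _ _
    rw [le_div_iff₀ hε] at this
    nlinarith
end

section
/- Let φ be continuous, compactly supported, with 𝟙_{[−1/2,1/2]} ≤ φ ≤ 1+η and supp φ ⊂ [−(1+η)/2, (1+η)/2]. Then for any ξ ∈ ℝ, ℓ ∈ (0, L], and p ∈ [−L, L] (L > 0 fixed): ℓ ∫_ℝ φ(u) e^{−ξℓu} du ≤ e^{ξp} ∫_{[p−ℓ/2, p+ℓ/2]} e^{−ξx} dx + η·C(ξ, L), where C(ξ,L) depends only on ξ and L, and similarly ℓ ∫ φ(u) e^{−ξℓu} du ≥ e^{ξp} ∫_{[p−ℓ/2, p+ℓ/2]} e^{−ξx} dx − η·C(ξ,L). -/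
open Real MeasureTheory

/-- Comparison of the mollified integral `ℓ∫φ(u)e^{−ξℓu}du` with
`e^{ξp}∫_I e^{−ξx}dx`, `I = [p−ℓ/2, p+ℓ/2]`, up to an error `O(η)` with
constant depending only on `ξ` and `L`. -/
theorem stmt_13 (ξ L : ℝ) (hL : 0 < L) :
    ∃ C > (0:ℝ), ∀ η ∈ Set.Ioo (0:ℝ) 1, ∀ φ : ℝ → ℝ, Continuous φ →
      (∀ u ∈ Set.Icc (-(1/2) : ℝ) (1/2), 1 ≤ φ u) →
      (∀ u : ℝ, 0 ≤ φ u ∧ φ u ≤ 1 + η) →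
      (∀ u : ℝ, φ u ≠ 0 → u ∈ Set.Icc (-((1 + η)/2)) ((1 + η)/2)) →
      ∀ ℓ ∈ Set.Ioc (0:ℝ) L, ∀ p ∈ Set.Icc (-L) L,
        |ℓ * (∫ u : ℝ, φ u * Real.exp (-(ξ * ℓ * u))) -
            Real.exp (ξ * p) * ∫ x in (p - ℓ/2)..(p + ℓ/2), Real.exp (-(ξ * x))| ≤ η * C := by
  set M := Real.exp (|ξ| * L) with hMdef
  have hM0 : 0 < M := Real.exp_pos _
  refine ⟨3 * L * M, by positivity, ?_⟩
  rintro η ⟨hη0, hη1⟩ φ hφc hφ1 hφb hφsupp ℓ ⟨hℓ0, hℓL⟩ p ⟨hpl, hpu⟩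
  set E : ℝ → ℝ := fun u => Real.exp (-(ξ * ℓ * u)) with hEdef
  have hEc : Continuous E := by continuity
  have hEpos : ∀ u, 0 < E u := fun u => Real.exp_pos _
  have hEle : ∀ u : ℝ, |u| ≤ 1 → E u ≤ M := by
    intro u hu
    have : -(ξ * ℓ * u) ≤ |ξ| * L := by
      calc -(ξ * ℓ * u) ≤ |ξ * ℓ * u| := neg_le_abs _
        _ = |ξ| * |ℓ| * |u| := by rw [abs_mul, abs_mul]
        _ ≤ |ξ| * L * 1 := by
            apply mul_le_mul (by
              apply mul_le_mul_of_nonneg_left _ (abs_nonneg ξ)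
              rw [abs_of_pos hℓ0]; exact hℓL) hu (abs_nonneg u)
            positivity
        _ = |ξ| * L := by ring
    exact Real.exp_le_exp.mpr this
  -- step (a) : rewrite RHS
  have ha : Real.exp (ξ * p) * ∫ x in (p - ℓ/2)..(p + ℓ/2), Real.exp (-(ξ * x)) =
      ℓ * ∫ u in (-(1/2):ℝ)..(1/2), E u := by
    have h1 := intervalIntegral.smul_integral_comp_mul_add (a := (-(1/2):ℝ)) (b := 1/2)
        (f := fun x => Real.exp (-(ξ * x))) ℓ p
    have h2 : (∫ u in (-(1/2):ℝ)..(1/2), Real.exp (-(ξ * (ℓ * u + p)))) =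
        Real.exp (-(ξ * p)) * ∫ u in (-(1/2):ℝ)..(1/2), E u := by
      rw [← intervalIntegral.integral_const_mul]
      congr 1; ext u
      rw [hEdef, ← Real.exp_add]; ring_nf
    have h3 : ℓ * (-(1/2)) + p = p - ℓ/2 := by ring
    have h4 : ℓ * (1/2) + p = p + ℓ/2 := by ring
    rw [h3, h4] at h1
    rw [← h1, smul_eq_mul, h2]
    have h5 : Real.exp (ξ * p) * Real.exp (-(ξ * p)) = 1 := by
      rw [← Real.exp_add]; ring_nf; exact Real.exp_zero
    set J := ∫ u in (-(1/2):ℝ)..(1/2), E u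
    linear_combination (ℓ * J) * h5
  -- step (b) : interval integral as indicator integral
  set S : Set ℝ := Set.Ioc (-(1/2):ℝ) (1/2) with hSdef
  have hb : (∫ u in (-(1/2):ℝ)..(1/2), E u) = ∫ u : ℝ, S.indicator E u := by
    rw [intervalIntegral.integral_of_le (by norm_num), ← integral_indicator measurableSet_Ioc]
  -- integrabilities
  have hφE_int : Integrable (fun u => φ u * E u) := by
    apply Continuous.integrable_of_hasCompactSupport (hφc.mul hEc)
    apply HasCompactSupport.intro (isCompact_Icc (a := -((1 + η)/2)) (b := (1 + η)/2))
    intro x hx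
    have : φ x = 0 := by
      by_contra h
      exact hx (hφsupp x h)
    simp [this]
  have hind_int : Integrable (S.indicator E) := by
    rw [integrable_indicator_iff measurableSet_Ioc]
    exact hEc.integrableOn_Ioc
  -- the difference function
  set g : ℝ → ℝ := fun u => φ u * E u - S.indicator E u with hgdef
  clear_value g
  have hg_int : Integrable g := by rw [hgdef]; exact hφE_int.sub hind_int
  have hg_nonneg : ∀ u, 0 ≤ g u := by
    intro u
    by_cases hu : u ∈ S
    · have hu' : u ∈ Set.Icc (-(1/2):ℝ) (1/2) := ⟨hu.1.le, hu.2⟩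
      have h1 : 1 ≤ φ u := hφ1 u hu'
      simp only [hgdef, Set.indicator_of_mem hu]
      nlinarith [hEpos u]
    · simp only [hgdef, Set.indicator_of_notMem hu]
      have := (hφb u).1
      nlinarith [(hEpos u).le]
  -- bounding function k
  set k : ℝ → ℝ := fun u =>
      S.indicator (fun _ => η * M) u
      + (Set.Icc (-((1 + η)/2)) (-(1/2):ℝ)).indicator (fun _ => 2 * M) u
      + (Set.Ioc ((1/2):ℝ) ((1 + η)/2)).indicator (fun _ => 2 * M) u with hkdef
  clear_value k
  have hk1 : Integrable (S.indicator (fun _ => η * M)) := by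
    rw [integrable_indicator_iff measurableSet_Ioc]
    exact (integrableOn_const_iff).mpr (Or.inr measure_Ioc_lt_top)
  have hk2 : Integrable ((Set.Icc (-((1 + η)/2)) (-(1/2):ℝ)).indicator (fun _ => 2 * M)) := by
    rw [integrable_indicator_iff measurableSet_Icc]
    exact (integrableOn_const_iff).mpr (Or.inr measure_Icc_lt_top)
  have hk3 : Integrable ((Set.Ioc ((1/2):ℝ) ((1 + η)/2)).indicator (fun _ => 2 * M)) := by
    rw [integrable_indicator_iff measurableSet_Ioc]
    exact (integrableOn_const_iff).mpr (Or.inr measure_Ioc_lt_top)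
  have hk12 : Integrable (fun u => S.indicator (fun _ => η * M) u
      + (Set.Icc (-((1 + η)/2)) (-(1/2):ℝ)).indicator (fun _ => 2 * M) u) := hk1.add hk2
  have hk_int : Integrable k := by rw [hkdef]; exact hk12.add hk3
  have hgk : ∀ u, g u ≤ k u := by
    intro u
    have hind_nonneg : ∀ (s : Set ℝ) (c : ℝ), 0 ≤ c → 0 ≤ s.indicator (fun _ => c) u := by
      intro s c hc; exact Set.indicator_nonneg (fun _ _ => hc) u
    by_cases hu : u ∈ S
    · have hu1 : |u| ≤ 1 := by
        rw [abs_le]; constructor <;> [linarith [hu.1.le]; linarith [hu.2]]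
      have h1 : φ u ≤ 1 + η := (hφb u).2
      have h2 : g u = (φ u - 1) * E u := by
        simp only [hgdef, Set.indicator_of_mem hu]; ring
      have h3 : g u ≤ η * M := by
        rw [h2]
        calc (φ u - 1) * E u ≤ η * E u := by
              apply mul_le_mul_of_nonneg_right (by linarith) (hEpos u).le
          _ ≤ η * M := mul_le_mul_of_nonneg_left (hEle u hu1) hη0.le
      calc g u ≤ η * M := h3
        _ ≤ k u := by
            simp only [hkdef, Set.indicator_of_mem hu]
            have := hind_nonneg (Set.Icc (-((1 + η)/2)) (-(1/2):ℝ)) (2*M) (by positivity)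
            have := hind_nonneg (Set.Ioc ((1/2):ℝ) ((1 + η)/2)) (2*M) (by positivity)
            linarith
    · by_cases hφu : φ u = 0
      · have : g u = 0 := by simp [hgdef, Set.indicator_of_notMem hu, hφu]
        rw [this]
        have h1 := hind_nonneg S (η * M) (by positivity)
        have h2 := hind_nonneg (Set.Icc (-((1 + η)/2)) (-(1/2):ℝ)) (2*M) (by positivity)
        have h3 := hind_nonneg (Set.Ioc ((1/2):ℝ) ((1 + η)/2)) (2*M) (by positivity)
        simp only [hkdef]; linarith
      · have hmem := hφsupp u hφu
        have hu1 : |u| ≤ 1 := by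
          rw [abs_le]; constructor <;> [linarith [hmem.1]; linarith [hmem.2]]
        have hgu : g u = φ u * E u := by
          simp [hgdef, Set.indicator_of_notMem hu]
        have hguB : g u ≤ 2 * M := by
          rw [hgu]
          calc φ u * E u ≤ 2 * E u := by
                apply mul_le_mul_of_nonneg_right _ (hEpos u).le
                linarith [(hφb u).2]
            _ ≤ 2 * M := by linarith [hEle u hu1]
        -- u is in one of the two side sets
        have hS' : u ≤ -(1/2) ∨ (1/2:ℝ) < u := by
          simp only [hSdef, Set.mem_Ioc, not_and_or, not_lt, not_le] at hu
          rcases hu with h | h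
          · left; linarith
          · right; linarith
        have h1 := hind_nonneg S (η * M) (by positivity)
        rcases hS' with h | h
        · have hm : u ∈ Set.Icc (-((1 + η)/2)) (-(1/2):ℝ) := ⟨hmem.1, h⟩
          have h3 := hind_nonneg (Set.Ioc ((1/2):ℝ) ((1 + η)/2)) (2*M) (by positivity)
          simp only [hkdef, Set.indicator_of_mem hm]
          linarith
        · have hm : u ∈ Set.Ioc ((1/2):ℝ) ((1 + η)/2) := ⟨h, hmem.2⟩
          have h2 := hind_nonneg (Set.Icc (-((1 + η)/2)) (-(1/2):ℝ)) (2*M) (by positivity)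
          simp only [hkdef, Set.indicator_of_mem hm]
          linarith
  -- ∫ k = 3 η M
  have hk_val : (∫ u : ℝ, k u) = 3 * η * M := by
    have e1 : (∫ u : ℝ, S.indicator (fun _ => η * M) u) = η * M := by
      rw [integral_indicator_const _ measurableSet_Ioc]
      rw [measureReal_def, Real.volume_Ioc]
      rw [ENNReal.toReal_ofReal (by norm_num)]
      simp; ring_nf
    have e2 : (∫ u : ℝ, (Set.Icc (-((1 + η)/2)) (-(1/2):ℝ)).indicator (fun _ => 2 * M) u)
        = η * M := by
      rw [integral_indicator_const _ measurableSet_Icc]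
      rw [measureReal_def, Real.volume_Icc]
      rw [ENNReal.toReal_ofReal (by linarith)]
      rw [smul_eq_mul]; ring
    have e3 : (∫ u : ℝ, (Set.Ioc ((1/2):ℝ) ((1 + η)/2)).indicator (fun _ => 2 * M) u)
        = η * M := by
      rw [integral_indicator_const _ measurableSet_Ioc]
      rw [measureReal_def, Real.volume_Ioc]
      rw [ENNReal.toReal_ofReal (by linarith)]
      rw [smul_eq_mul]; ring
    simp only [hkdef]
    rw [integral_add hk12 hk3, integral_add hk1 hk2, e1, e2, e3]
    ring
  -- conclusion
  have hDle : (∫ u : ℝ, g u) ≤ 3 * η * M := by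
    rw [← hk_val]
    exact integral_mono hg_int hk_int hgk
  have hDge : 0 ≤ ∫ u : ℝ, g u := integral_nonneg hg_nonneg
  have hsplit : ℓ * (∫ u : ℝ, φ u * E u) -
      Real.exp (ξ * p) * ∫ x in (p - ℓ/2)..(p + ℓ/2), Real.exp (-(ξ * x)) =
      ℓ * ∫ u : ℝ, g u := by
    rw [ha, hb, ← mul_sub, ← integral_sub hφE_int hind_int, hgdef]
  rw [hsplit, abs_of_nonneg (by positivity)]
  calc ℓ * ∫ u : ℝ, g u ≤ L * (3 * η * M) := by
        apply mul_le_mul hℓL hDle hDge hL.le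
    _ = η * (3 * L * M) := by ring
end
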